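/- Let k > 0, set h₂(z) := −15/(2k²) + cos(2z)/(2k²), h₃(z) := (3/(16k⁴))·cos(3z), and c₂ := 105. Then for all z ∈ ℝ, k⁴·( h₃⁗(z) − h₃(z) ) − c₂ cos(z) + 15 k²·( h₂''(z) − h₂(z) )·cos(z) + 15 cos³(z) = 0; that is, the third-order terms of the small-amplitude expansion satisfy the O(a³) equation exactly, and the solvability condition forces the speed correction c₂ = 105. -/

import Mathlib

/-- The order-`a²` correction in the small-amplitude expansion of the CDG–SK periodic wave:
`h₂(z) = −15/(2k²) + cos(2z)/(2k²)`. -/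
noncomputable def cdgskH2 (k : ℝ) : ℝ → ℝ := fun z =>
  -(15 / (2 * k ^ 2)) + Real.cos (2 * z) / (2 * k ^ 2)

/-- The order-`a³` correction in the small-amplitude expansion of the CDG–SK periodic wave:
`h₃(z) = (3/(16k⁴)) cos(3z)`. -/
noncomputable def cdgskH3 (k : ℝ) : ℝ → ℝ := fun z =>
  3 / (16 * k ^ 4) * Real.cos (3 * z)

private lemma hda_cos (a b z : ℝ) :
    HasDerivAt (fun z => a * Real.cos (b * z)) (-(a * b) * Real.sin (b * z)) z := by
  have h1 : HasDerivAt (fun z : ℝ => b * z) b z := by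
    simpa using (hasDerivAt_id z).const_mul b
  have := (Real.hasDerivAt_cos (b * z)).comp z h1
  exact (this.const_mul a).congr_deriv (by ring)

private lemma hda_sin (a b z : ℝ) :
    HasDerivAt (fun z => a * Real.sin (b * z)) ((a * b) * Real.cos (b * z)) z := by
  have h1 : HasDerivAt (fun z : ℝ => b * z) b z := by
    simpa using (hasDerivAt_id z).const_mul b
  have := (Real.hasDerivAt_sin (b * z)).comp z h1
  exact (this.const_mul a).congr_deriv (by ring)

private lemma deriv_a_cos (a b : ℝ) :
    deriv (fun z => a * Real.cos (b * z)) = fun z => -(a * b) * Real.sin (b * z) :=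
  funext fun z => (hda_cos a b z).deriv

private lemma deriv_a_sin (a b : ℝ) :
    deriv (fun z => a * Real.sin (b * z)) = fun z => (a * b) * Real.cos (b * z) :=
  funext fun z => (hda_sin a b z).deriv

private lemma iter_periodic {f : ℝ → ℝ} {c : ℝ} (hf : Function.Periodic f c) (n : ℕ) :
    Function.Periodic (iteratedDeriv n f) c := by
  induction n with
  | zero => simpa [iteratedDeriv_zero] using hf
  | succ n ih =>
    rw [iteratedDeriv_succ]
    intro x
    have hfun : (fun y => iteratedDeriv n f (y + c)) = iteratedDeriv n f := funext ih
    calc deriv (iteratedDeriv n f) (x + c)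
        = deriv (fun y => iteratedDeriv n f (y + c)) x := (deriv_comp_add_const _ _ _).symm
      _ = deriv (iteratedDeriv n f) x := by rw [hfun]

private lemma hasDeriv_F {f : ℝ → ℝ} (hf : ContDiff ℝ 4 f) (z : ℝ) :
    HasDerivAt (fun z => iteratedDeriv 3 f z * Real.cos z + iteratedDeriv 2 f z * Real.sin z
      - iteratedDeriv 1 f z * Real.cos z - f z * Real.sin z)
      ((iteratedDeriv 4 f z - f z) * Real.cos z) z := by
  have hd : ∀ n : ℕ, n < 4 → HasDerivAt (iteratedDeriv n f) (iteratedDeriv (n + 1) f z) z := by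
    intro n hn
    rw [iteratedDeriv_succ]
    exact (hf.differentiable_iteratedDeriv n (by exact_mod_cast hn) z).hasDerivAt
  have h0 : HasDerivAt f (iteratedDeriv 1 f z) z := by
    simpa [iteratedDeriv_zero] using hd 0 (by norm_num)
  have H := ((((hd 3 (by norm_num)).mul (Real.hasDerivAt_cos z)).add
      ((hd 2 (by norm_num)).mul (Real.hasDerivAt_sin z))).sub
      ((hd 1 (by norm_num)).mul (Real.hasDerivAt_cos z))).sub
      (h0.mul (Real.hasDerivAt_sin z))
  exact H.congr_deriv (by ring)


/-- **The `O(a³)` equation of the CDG–SK small-amplitude expansion.**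
For `k > 0`, with `h₂(z) = −15/(2k²) + cos(2z)/(2k²)`, `h₃(z) = (3/(16k⁴)) cos(3z)` and
`c₂ = 105`, one has for all `z`:
`k⁴ (h₃⁗ − h₃) − c₂ cos z + 15 k² (h₂'' − h₂) cos z + 15 cos³ z = 0`.
Moreover the solvability condition forces the speed correction `c₂ = 105`: if the same
equation holds for some `c₂' ∈ ℝ` and some `C⁴`, `2π`-periodic `h` in place of `h₃`,
then `c₂' = 105`. -/
theorem cdgsk_third_order_correction (k : ℝ) (hk : 0 < k) (c₂ : ℝ) (hc₂ : c₂ = 105) :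
    (∀ z : ℝ,
      k ^ 4 * (iteratedDeriv 4 (cdgskH3 k) z - cdgskH3 k z) - c₂ * Real.cos z
        + 15 * k ^ 2 * (iteratedDeriv 2 (cdgskH2 k) z - cdgskH2 k z) * Real.cos z
        + 15 * (Real.cos z) ^ 3 = 0) ∧
    (∀ (c₂' : ℝ) (h : ℝ → ℝ), ContDiff ℝ 4 h →
      Function.Periodic h (2 * Real.pi) →
      (∀ z : ℝ,
        k ^ 4 * (iteratedDeriv 4 h z - h z) - c₂' * Real.cos z
          + 15 * k ^ 2 * (iteratedDeriv 2 (cdgskH2 k) z - cdgskH2 k z) * Real.cos z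
          + 15 * (Real.cos z) ^ 3 = 0) →
      c₂' = 105) := by
  subst hc₂
  have hk2 : k ^ 2 ≠ 0 := pow_ne_zero _ hk.ne'
  have hk4 : k ^ 4 ≠ 0 := pow_ne_zero _ hk.ne'
  -- second iterated derivative of h₂
  have hi2 : ∀ z, iteratedDeriv 2 (cdgskH2 k) z = -(4 * (1 / (2 * k ^ 2))) * Real.cos (2 * z) := by
    intro z
    have he : cdgskH2 k = fun z => -(15 / (2 * k ^ 2)) + (1 / (2 * k ^ 2)) * Real.cos (2 * z) := by
      funext z; simp only [cdgskH2]; ring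
    rw [he, iteratedDeriv_succ, iteratedDeriv_one]
    have hd1 : deriv (fun z => -(15 / (2 * k ^ 2)) + (1 / (2 * k ^ 2)) * Real.cos (2 * z))
        = fun z => -((1 / (2 * k ^ 2)) * 2) * Real.sin (2 * z) := by
      funext z
      exact ((hda_cos (1 / (2 * k ^ 2)) 2 z).const_add _).deriv
    rw [hd1]
    have : deriv (fun z => -((1 / (2 * k ^ 2)) * 2) * Real.sin (2 * z)) z
        = (-((1 / (2 * k ^ 2)) * 2) * 2) * Real.cos (2 * z) := (hda_sin _ 2 z).deriv
    rw [this]; ring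
  -- fourth iterated derivative of h₃
  have hi4 : ∀ z, iteratedDeriv 4 (cdgskH3 k) z = 81 * (3 / (16 * k ^ 4)) * Real.cos (3 * z) := by
    intro z
    have he : cdgskH3 k = fun z => (3 / (16 * k ^ 4)) * Real.cos (3 * z) := rfl
    rw [iteratedDeriv_succ, iteratedDeriv_succ, iteratedDeriv_succ, iteratedDeriv_one, he,
      deriv_a_cos, deriv_a_sin, deriv_a_cos, deriv_a_sin]
    ring
  have key1 : ∀ z : ℝ,
      k ^ 4 * (iteratedDeriv 4 (cdgskH3 k) z - cdgskH3 k z) - 105 * Real.cos z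
        + 15 * k ^ 2 * (iteratedDeriv 2 (cdgskH2 k) z - cdgskH2 k z) * Real.cos z
        + 15 * (Real.cos z) ^ 3 = 0 := by
    intro z
    rw [hi2 z, hi4 z]
    simp only [cdgskH2, cdgskH3]
    rw [Real.cos_three_mul, Real.cos_two_mul]
    field_simp
    ring
  refine ⟨key1, ?_⟩
  intro c₂' h hC hper heq
  -- regularity and periodicity of h₃
  have h3C : ContDiff ℝ 4 (cdgskH3 k) := by
    have : ContDiff ℝ 4 fun z : ℝ => 3 / (16 * k ^ 4) * Real.cos (3 * z) :=
      contDiff_const.mul (Real.contDiff_cos.comp (contDiff_const.mul contDiff_id))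
    exact this
  have h3per : Function.Periodic (cdgskH3 k) (2 * Real.pi) := by
    intro x
    simp only [cdgskH3]
    rw [show 3 * (x + 2 * Real.pi) = 3 * x + (3 : ℤ) * (2 * Real.pi) by push_cast; ring,
      Real.cos_add_int_mul_two_pi]
  -- the combined function with zero derivative
  set c : ℝ := (c₂' - 105) / k ^ 4 with hc
  have hΦ : ∀ z : ℝ, HasDerivAt (fun z =>
      (iteratedDeriv 3 h z * Real.cos z + iteratedDeriv 2 h z * Real.sin z
        - iteratedDeriv 1 h z * Real.cos z - h z * Real.sin z)
      - (iteratedDeriv 3 (cdgskH3 k) z * Real.cos z + iteratedDeriv 2 (cdgskH3 k) z * Real.sin z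
        - iteratedDeriv 1 (cdgskH3 k) z * Real.cos z - cdgskH3 k z * Real.sin z)
      - c * (z / 2 + 1 / 4 * Real.sin (2 * z))) 0 z := by
    intro z
    have hG : HasDerivAt (fun z : ℝ => c * (z / 2 + 1 / 4 * Real.sin (2 * z)))
        (c * (Real.cos z) ^ 2) z := by
      have h1 : HasDerivAt (fun z : ℝ => z / 2 + 1 / 4 * Real.sin (2 * z))
          (1 / 2 + (1 / 4 * 2) * Real.cos (2 * z)) z :=
        ((hasDerivAt_id z).div_const 2).add (hda_sin (1 / 4) 2 z)
      exact (h1.const_mul c).congr_deriv (by rw [Real.cos_sq]; ring)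
    have H := ((hasDeriv_F hC z).sub (hasDeriv_F h3C z)).sub hG
    refine H.congr_deriv (Eq.symm ?_)
    have e1 := heq z
    have e2 := key1 z
    rw [hc]
    field_simp
    linear_combination (e2 - e1) * Real.cos z
  have hconst := is_const_of_deriv_eq_zero (fun z => (hΦ z).differentiableAt)
    (fun z => (hΦ z).deriv) (2 * Real.pi) 0
  -- evaluate, using periodicity
  have p0 : h (2 * Real.pi) = h 0 := by simpa using hper 0
  have p1 : iteratedDeriv 1 h (2 * Real.pi) = iteratedDeriv 1 h 0 := by
    simpa using iter_periodic hper 1 0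
  have p2 : iteratedDeriv 2 h (2 * Real.pi) = iteratedDeriv 2 h 0 := by
    simpa using iter_periodic hper 2 0
  have p3 : iteratedDeriv 3 h (2 * Real.pi) = iteratedDeriv 3 h 0 := by
    simpa using iter_periodic hper 3 0
  have q0 : cdgskH3 k (2 * Real.pi) = cdgskH3 k 0 := by simpa using h3per 0
  have q1 : iteratedDeriv 1 (cdgskH3 k) (2 * Real.pi) = iteratedDeriv 1 (cdgskH3 k) 0 := by
    simpa using iter_periodic h3per 1 0
  have q2 : iteratedDeriv 2 (cdgskH3 k) (2 * Real.pi) = iteratedDeriv 2 (cdgskH3 k) 0 := by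
    simpa using iter_periodic h3per 2 0
  have q3 : iteratedDeriv 3 (cdgskH3 k) (2 * Real.pi) = iteratedDeriv 3 (cdgskH3 k) 0 := by
    simpa using iter_periodic h3per 3 0
  have hs4 : Real.sin (2 * (2 * Real.pi)) = 0 := by
    rw [show (2 : ℝ) * (2 * Real.pi) = 0 + (2 : ℤ) * (2 * Real.pi) by push_cast; ring,
      Real.sin_add_int_mul_two_pi, Real.sin_zero]
  simp only [p0, p1, p2, p3, q0, q1, q2, q3, hs4, Real.cos_two_pi, Real.sin_two_pi,
    Real.cos_zero, Real.sin_zero, mul_zero, mul_one, zero_div, add_zero, zero_add] at hconst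
  have hpi : c * Real.pi = 0 := by linear_combination -hconst
  rw [hc] at hpi
  have : c₂' - 105 = 0 := by
    field_simp [Real.pi_ne_zero] at hpi
    rw [mul_zero] at hpi
    rcases mul_eq_zero.mp hpi with h' | h'
    · exact h'
    · exact absurd h' Real.pi_ne_zero
  linarith
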